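/- Well-balanced property of the first-order scheme: suppose the cell averages satisfy uᵢ = 0 for all i and Π'(ρᵢ) + Hᵢ = C on each connected component of the discrete support {i : ρᵢ > 0}. Then the interface reconstructions ρᵢ₊½⁻ = ξ((Π'(ρᵢ) + Hᵢ − Hᵢ₊½)₊) and ρᵢ₊½⁺ = ξ((Π'(ρᵢ₊₁) + Hᵢ₊₁ − Hᵢ₊½)₊) with Hᵢ₊½ = max(Hᵢ, Hᵢ₊₁) coincide: ρᵢ₊½⁻ = ρᵢ₊½⁺, and consequently for any consistent numerical flux 𝔉 the flux difference exactly balances the source term Sᵢ = (0, P(ρᵢ₊½⁻) − P(ρᵢ₋½⁺))/Δxᵢ, so dUᵢ/dt = 0 for all i. -/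

import Mathlib

/-- Well-balanced property of the first-order scheme: if `uᵢ = 0` for all `i` and
`Pi'(ρᵢ) + Hᵢ` is constant on each connected component of the discrete support
(together with the natural admissibility conditions at vacuum cells), then the
interface reconstructions
`ρᵢ₊½⁻ = ξ((Pi'(ρᵢ)+Hᵢ-Hᵢ₊½)₊)` and `ρᵢ₊½⁺ = ξ((Pi'(ρᵢ₊₁)+Hᵢ₊₁-Hᵢ₊½)₊)`
with `Hᵢ₊½ = max(Hᵢ,Hᵢ₊₁)` coincide, and for any consistent numerical flux `𝔉`
the flux difference exactly balances the well-balanced source term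
`Sᵢ = (0, P(ρᵢ₊½⁻) - P(ρᵢ₋½⁺))/Δxᵢ`, so `dUᵢ/dt = 0` for all `i`. -/
theorem stmt_13 (dPif P ξ : ℝ → ℝ) (ρ u H Δx : ℤ → ℝ)
    (𝔉 : ℝ × ℝ → ℝ × ℝ → ℝ × ℝ)
    -- consistency `𝔉(U,U) = F(U)` with `F(ρ, ρu) = (ρu, ρu² + P(ρ))`
    (hcons : ∀ r v : ℝ, 𝔉 (r, v) (r, v) = (r * v, r * v^2 + P r))
    (hΔx : ∀ i, 0 < Δx i) (hρnn : ∀ i, 0 ≤ ρ i)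
    -- all discrete velocities vanish
    (hu : ∀ i, u i = 0)
    -- `ξ` is the inverse of `Pi'` extended by zero
    (hξ : ∀ s : ℝ, 0 < s → ξ (dPif s) = s)
    (hξ0 : ∀ y : ℝ, y ≤ 0 → ξ y = 0)
    (hdPif0 : dPif 0 = 0)
    -- `Pi'(ρᵢ) + Hᵢ` constant on each connected component of `{i : ρᵢ > 0}`
    (hsteady : ∀ i, 0 < ρ i → 0 < ρ (i+1) →
      dPif (ρ i) + H i = dPif (ρ (i+1)) + H (i+1))
    -- admissibility of the steady state at vacuum cells
    (hadm : ∀ i, ρ i = 0 → ∀ j, (j = i + 1 ∨ j = i - 1) → 0 < ρ j →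
      dPif (ρ j) + H j ≤ H i)
    -- interface reconstructions
    (ρm ρp : ℤ → ℝ)
    (hρm : ∀ i, ρm i = ξ (max (dPif (ρ i) + H i - max (H i) (H (i+1))) 0))
    (hρp : ∀ i, ρp i = ξ (max (dPif (ρ (i+1)) + H (i+1) - max (H i) (H (i+1))) 0)) :
    (∀ i, ρm i = ρp i) ∧
    (∀ i, 𝔉 (ρm i, u i) (ρp i, u (i+1)) - 𝔉 (ρm (i-1), u (i-1)) (ρp (i-1), u i)
      = ((0:ℝ), P (ρm i) - P (ρp (i-1)))) ∧
    (∀ i, (Δx i)⁻¹ •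
        (((0:ℝ), P (ρm i) - P (ρp (i-1)))
          - (𝔉 (ρm i, u i) (ρp i, u (i+1)) - 𝔉 (ρm (i-1), u (i-1)) (ρp (i-1), u i)))
      = ((0:ℝ), (0:ℝ))) := by

  have key : ∀ i, ρm i = ρp i := by
    intro i
    rw [hρm, hρp]
    rcases (hρnn i).lt_or_eq with h1 | h1
    · rcases (hρnn (i+1)).lt_or_eq with h2 | h2
      · rw [hsteady i h1 h2]
      · have ha : dPif (ρ i) + H i ≤ H (i+1) :=
          hadm (i+1) h2.symm i (Or.inr (by ring)) h1
        have hb : dPif (ρ (i+1)) + H (i+1) ≤ max (H i) (H (i+1)) := by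
          rw [← h2, hdPif0]; simp
        rw [max_eq_right (sub_nonpos.2 (ha.trans (le_max_right _ _))),
            max_eq_right (sub_nonpos.2 hb)]
    · have ha : dPif (ρ i) + H i ≤ max (H i) (H (i+1)) := by
        rw [← h1, hdPif0]; simp
      rcases (hρnn (i+1)).lt_or_eq with h2 | h2
      · have hb := hadm i h1.symm (i+1) (Or.inl rfl) h2
        rw [max_eq_right (sub_nonpos.2 ha),
            max_eq_right (sub_nonpos.2 (hb.trans (le_max_left _ _)))]
      · have hb : dPif (ρ (i+1)) + H (i+1) ≤ max (H i) (H (i+1)) := by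
          rw [← h2, hdPif0]; simp
        rw [max_eq_right (sub_nonpos.2 ha), max_eq_right (sub_nonpos.2 hb)]
  have flux : ∀ i, 𝔉 (ρm i, u i) (ρp i, u (i+1)) = ((0:ℝ), P (ρm i)) := by
    intro i
    rw [← key i, hu i, hu (i+1), hcons]
    norm_num
  have flux2 : ∀ i, 𝔉 (ρm (i-1), u (i-1)) (ρp (i-1), u i) = ((0:ℝ), P (ρp (i-1))) := by
    intro i
    have := flux (i-1)
    rw [show i - 1 + 1 = i by ring] at this
    rw [this, key (i-1)]
  have second : ∀ i, 𝔉 (ρm i, u i) (ρp i, u (i+1)) - 𝔉 (ρm (i-1), u (i-1)) (ρp (i-1), u i)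
      = ((0:ℝ), P (ρm i) - P (ρp (i-1))) := by
    intro i
    rw [flux i, flux2 i, Prod.mk_sub_mk, sub_zero]
  refine ⟨key, second, fun i => ?_⟩
  rw [second i]
  simp [Prod.smul_mk]; rfl
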